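/- Suppose f(·;t) is a μ-PL function for each t (i.e., (1/2)‖∇ₓf(x;t)‖² ≥ μ(f(x;t) − f*(t))), is L₁-smooth in x, and f(x;·) and the optimal value f*(·) are both G₂-Lipschitz in t. With stepsize β = 1/L₁ and ρ := 1 − μ/L₁ ∈ [0,1), the TVGD optimality gap satisfies for all k: f(x_k;t_k) − f_k* ≤ ρ^k (f(x₀;t₀) − f₀*) + 2G₂h(1 − ρ^k)/(1 − ρ). Consequently, limsup_{k→∞} (f_k − f_k*) ≤ 2G₂h/(1 − ρ). -/

import Mathlib

open InnerProductSpace Set Filter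

lemma descent_lemma {F : Type*} [NormedAddCommGroup F] [InnerProductSpace ℝ F]
    [CompleteSpace F] (f : F → ℝ) (g : F → F) (L : ℝ)
    (hgrad : ∀ x, HasGradientAt f (g x) x)
    (hlip : ∀ x y, ‖g x - g y‖ ≤ L * ‖x - y‖) (x y : F) :
    f y ≤ f x + (inner ℝ (g x) (y - x) : ℝ) + L / 2 * ‖y - x‖ ^ 2 := by
  set v := y - x with hv
  have key : ∀ τ : ℝ, HasDerivAt (fun τ : ℝ => f (x + τ • v))
      (inner ℝ (g (x + τ • v)) v : ℝ) τ := by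
    intro τ
    have hc : HasDerivAt (fun τ : ℝ => x + τ • v) v τ := by
      simpa using ((hasDerivAt_id τ).smul_const v).const_add x
    have := (hgrad (x + τ • v)).hasFDerivAt.comp_hasDerivAt τ hc
    simp [InnerProductSpace.toDual_apply_apply] at this
    exact this
  set ψ : ℝ → ℝ := fun τ => f (x + τ • v) - τ * (inner ℝ (g x) v : ℝ) - L / 2 * τ ^ 2 * ‖v‖ ^ 2
    with hψdef
  have hψ : ∀ τ : ℝ, HasDerivAt ψ
      ((inner ℝ (g (x + τ • v)) v : ℝ) - (inner ℝ (g x) v : ℝ) - L * τ * ‖v‖ ^ 2) τ := by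
    intro τ
    have h1 : HasDerivAt (fun τ : ℝ => τ * (inner ℝ (g x) v : ℝ)) (inner ℝ (g x) v : ℝ) τ := by
      simpa using (hasDerivAt_id τ).mul_const (inner ℝ (g x) v : ℝ)
    have h2 : HasDerivAt (fun τ : ℝ => L / 2 * τ ^ 2 * ‖v‖ ^ 2) (L * τ * ‖v‖ ^ 2) τ := by
      have := ((hasDerivAt_pow 2 τ).const_mul (L / 2)).mul_const (‖v‖ ^ 2)
      convert this using 1
      · rfl
      · rfl
      · ring
    exact ((key τ).sub h1).sub h2
  have hanti : AntitoneOn ψ (Icc (0:ℝ) 1) := by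
    apply antitoneOn_of_deriv_nonpos (convex_Icc 0 1)
    · exact fun τ _ => ((hψ τ).differentiableAt.continuousAt).continuousWithinAt
    · exact fun τ _ => (hψ τ).differentiableAt.differentiableWithinAt
    · intro τ hτ
      rw [interior_Icc] at hτ
      rw [(hψ τ).deriv]
      have hineq : (inner ℝ (g (x + τ • v)) v : ℝ) - (inner ℝ (g x) v : ℝ) ≤ L * τ * ‖v‖ ^ 2 := by
        have h3 : (inner ℝ (g (x + τ • v)) v : ℝ) - (inner ℝ (g x) v : ℝ)
            = (inner ℝ (g (x + τ • v) - g x) v : ℝ) := by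
          rw [inner_sub_left]
        rw [h3]
        calc (inner ℝ (g (x + τ • v) - g x) v : ℝ) ≤ ‖g (x + τ • v) - g x‖ * ‖v‖ :=
              real_inner_le_norm _ _
          _ ≤ (L * ‖(x + τ • v) - x‖) * ‖v‖ := by
              have := hlip (x + τ • v) x
              exact mul_le_mul_of_nonneg_right this (norm_nonneg _)
          _ = L * τ * ‖v‖ ^ 2 := by
              rw [add_sub_cancel_left, norm_smul]
              rw [Real.norm_eq_abs, abs_of_pos hτ.1]
              ring
      linarith
  have h01 : ψ 1 ≤ ψ 0 := hanti (by simp) (by simp) zero_le_one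
  have e1 : x + (1:ℝ) • v = y := by rw [one_smul, hv]; abel
  have e0 : x + (0:ℝ) • v = x := by simp
  simp only [hψdef, e1, e0] at h01
  nlinarith [h01]

/-- Theorem 3: linear convergence of the TVGD optimality gap to an O(h) error bound
for μ-PL objectives. -/
theorem stmt_4 {d : ℕ} (f : EuclideanSpace ℝ (Fin d) → ℝ → ℝ)
    (g : EuclideanSpace ℝ (Fin d) → ℝ → EuclideanSpace ℝ (Fin d))
    (L₁ G₂ h μ : ℝ) (hL₁ : 0 < L₁) (hh : 0 < h) (hG₂ : 0 ≤ G₂)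
    (hμ : 0 < μ) (hμL : μ ≤ L₁)
    (hgrad : ∀ (t : ℝ) (x : EuclideanSpace ℝ (Fin d)),
      HasGradientAt (fun y => f y t) (g x t) x)
    (hlipg : ∀ (t : ℝ) (x y : EuclideanSpace ℝ (Fin d)),
      ‖g x t - g y t‖ ≤ L₁ * ‖x - y‖)
    (fstar : ℝ → ℝ)
    (hopt : ∀ (t : ℝ) (x : EuclideanSpace ℝ (Fin d)), fstar t ≤ f x t)
    (hattained : ∀ t : ℝ, ∃ x, f x t = fstar t)
    (hPL : ∀ (x : EuclideanSpace ℝ (Fin d)) (t : ℝ),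
      μ * (f x t - fstar t) ≤ (1 / 2) * ‖g x t‖ ^ 2)
    (hlipt : ∀ (x : EuclideanSpace ℝ (Fin d)) (s t : ℝ),
      |f x s - f x t| ≤ G₂ * |s - t|)
    (hlipstar : ∀ s t : ℝ, |fstar s - fstar t| ≤ G₂ * |s - t|)
    (x : ℕ → EuclideanSpace ℝ (Fin d))
    (hupd : ∀ k : ℕ, x (k + 1) = x k - (1 / L₁) • g (x k) (k * h)) :
    (∀ k : ℕ, f (x k) (k * h) - fstar (k * h) ≤
        (1 - μ / L₁) ^ k * (f (x 0) 0 - fstar 0) +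
          2 * G₂ * h * (1 - (1 - μ / L₁) ^ k) / (1 - (1 - μ / L₁))) ∧
    Filter.limsup (fun k : ℕ => f (x k) (k * h) - fstar (k * h)) Filter.atTop ≤
      2 * G₂ * h / (1 - (1 - μ / L₁)) := by
  set ρ : ℝ := 1 - μ / L₁ with hρdef
  have hμL' : μ / L₁ ≤ 1 := (div_le_one hL₁).2 hμL
  have hμL0 : 0 < μ / L₁ := div_pos hμ hL₁
  have hρ0 : 0 ≤ ρ := by simp [hρdef]; linarith
  have hρ1 : ρ < 1 := by simp [hρdef]; linarith
  have h1ρ : 1 - ρ = μ / L₁ := by simp [hρdef]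
  have h1ρpos : 0 < 1 - ρ := by rw [h1ρ]; exact hμL0
  -- descent step
  have hdesc : ∀ k : ℕ, f (x (k+1)) (k * h) ≤
      f (x k) (k * h) - 1 / (2 * L₁) * ‖g (x k) (k * h)‖ ^ 2 := by
    intro k
    have hD := descent_lemma (fun y => f y ((k:ℝ) * h)) (fun y => g y ((k:ℝ) * h)) L₁
      (hgrad _) (fun a b => hlipg _ a b) (x k) (x (k+1))
    have hdiff : x (k+1) - x k = -((1 / L₁) • g (x k) ((k:ℝ) * h)) := by
      rw [hupd k]; abel
    rw [hdiff] at hD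
    have hinner : (inner ℝ (g (x k) ((k:ℝ) * h)) (-((1 / L₁) • g (x k) ((k:ℝ) * h))) : ℝ)
        = -(1 / L₁) * ‖g (x k) ((k:ℝ) * h)‖ ^ 2 := by
      rw [inner_neg_right, real_inner_smul_right, real_inner_self_eq_norm_sq]
      ring
    have hnorm : ‖-((1 / L₁) • g (x k) ((k:ℝ) * h))‖ ^ 2
        = (1 / L₁) ^ 2 * ‖g (x k) ((k:ℝ) * h)‖ ^ 2 := by
      rw [norm_neg, norm_smul, Real.norm_eq_abs, abs_of_pos (by positivity : (0:ℝ) < 1 / L₁)]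
      ring
    rw [hinner, hnorm] at hD
    have : L₁ / 2 * ((1 / L₁) ^ 2 * ‖g (x k) ((k:ℝ) * h)‖ ^ 2)
        = 1 / (2 * L₁) * ‖g (x k) ((k:ℝ) * h)‖ ^ 2 := by
      field_simp
    have hx : -(1 / L₁) * ‖g (x k) ((k:ℝ) * h)‖ ^ 2
        + 1 / (2 * L₁) * ‖g (x k) ((k:ℝ) * h)‖ ^ 2
        = -(1 / (2 * L₁) * ‖g (x k) ((k:ℝ) * h)‖ ^ 2) := by
      field_simp
      ring
    linarith [hD, this.le, this.ge, hx]
  -- contraction step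
  have hcontr : ∀ k : ℕ, f (x (k+1)) (k * h) - fstar (k * h) ≤
      ρ * (f (x k) (k * h) - fstar (k * h)) := by
    intro k
    have hP := hPL (x k) ((k:ℝ) * h)
    have hd := hdesc k
    have hLinv : 0 < 1 / L₁ := by positivity
    have : (μ / L₁) * (f (x k) ((k:ℝ) * h) - fstar ((k:ℝ) * h))
        ≤ 1 / (2 * L₁) * ‖g (x k) ((k:ℝ) * h)‖ ^ 2 := by
      have := mul_le_mul_of_nonneg_left hP hLinv.le
      calc (μ / L₁) * (f (x k) ((k:ℝ) * h) - fstar ((k:ℝ) * h))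
          = 1 / L₁ * (μ * (f (x k) ((k:ℝ) * h) - fstar ((k:ℝ) * h))) := by ring
        _ ≤ 1 / L₁ * (1 / 2 * ‖g (x k) ((k:ℝ) * h)‖ ^ 2) := this
        _ = 1 / (2 * L₁) * ‖g (x k) ((k:ℝ) * h)‖ ^ 2 := by ring
    simp only [hρdef]
    nlinarith [this, hd]
  -- one-step gap recurrence
  have hrec : ∀ k : ℕ, f (x (k+1)) ((k+1 : ℕ) * h) - fstar ((k+1 : ℕ) * h) ≤
      ρ * (f (x k) (k * h) - fstar (k * h)) + 2 * G₂ * h := by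
    intro k
    have hts : |((k+1 : ℕ) : ℝ) * h - ((k : ℕ) : ℝ) * h| = h := by
      push_cast
      rw [show ((k : ℝ) + 1) * h - (k : ℝ) * h = h by ring, abs_of_pos hh]
    have h1 := hlipt (x (k+1)) (((k+1 : ℕ) : ℝ) * h) (((k : ℕ) : ℝ) * h)
    have h2 := hlipstar (((k+1 : ℕ) : ℝ) * h) (((k : ℕ) : ℝ) * h)
    rw [hts] at h1 h2
    have h1' := abs_le.1 h1
    have h2' := abs_le.1 h2
    have := hcontr k
    push_cast at h1' h2' ⊢
    linarith [h1'.1, h1'.2, h2'.1, h2'.2, this]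
  -- the main bound by induction
  have hmain : ∀ k : ℕ, f (x k) (k * h) - fstar (k * h) ≤
      ρ ^ k * (f (x 0) 0 - fstar 0) + 2 * G₂ * h * (1 - ρ ^ k) / (1 - ρ) := by
    intro k
    induction k with
    | zero => simp
    | succ k ih =>
      have hk := hrec k
      have hmul := mul_le_mul_of_nonneg_left ih hρ0
      have halg : ρ * (ρ ^ k * (f (x 0) 0 - fstar 0) + 2 * G₂ * h * (1 - ρ ^ k) / (1 - ρ))
          + 2 * G₂ * h
          = ρ ^ (k+1) * (f (x 0) 0 - fstar 0) + 2 * G₂ * h * (1 - ρ ^ (k+1)) / (1 - ρ) := by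
        field_simp
        ring
      calc f (x (k+1)) ((k+1 : ℕ) * h) - fstar ((k+1 : ℕ) * h)
          ≤ ρ * (f (x k) (k * h) - fstar (k * h)) + 2 * G₂ * h := hk
        _ ≤ ρ * (ρ ^ k * (f (x 0) 0 - fstar 0) + 2 * G₂ * h * (1 - ρ ^ k) / (1 - ρ))
            + 2 * G₂ * h := by linarith
        _ = _ := halg
  refine ⟨hmain, ?_⟩
  -- limsup bound
  set u : ℕ → ℝ := fun k => f (x k) (k * h) - fstar (k * h) with hudef
  set c : ℝ := 2 * G₂ * h / (1 - ρ) with hcdef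
  have hub : ∀ k : ℕ, u k ≤ ρ ^ k * (f (x 0) 0 - fstar 0) + c := by
    intro k
    refine (hmain k).trans ?_
    have hρk : 0 ≤ ρ ^ k := pow_nonneg hρ0 k
    have : 2 * G₂ * h * (1 - ρ ^ k) / (1 - ρ) ≤ 2 * G₂ * h / (1 - ρ) := by
      rw [div_le_div_iff₀ h1ρpos h1ρpos]
      nlinarith [mul_nonneg (mul_nonneg (mul_nonneg (by norm_num : (0:ℝ) ≤ 2) hG₂) hh.le)
        (mul_nonneg hρk h1ρpos.le)]
    simp only [hcdef]
    linarith [this]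
  have htend : Tendsto (fun k : ℕ => ρ ^ k * (f (x 0) 0 - fstar 0) + c) atTop (nhds c) := by
    have h0 : Tendsto (fun k : ℕ => ρ ^ k) atTop (nhds 0) :=
      tendsto_pow_atTop_nhds_zero_of_lt_one hρ0 hρ1
    have := (h0.mul_const (f (x 0) 0 - fstar 0)).add_const c
    simpa using this
  have hlow : ∀ k : ℕ, (0:ℝ) ≤ u k := fun k => sub_nonneg.2 (hopt _ _)
  calc Filter.limsup u Filter.atTop
      ≤ Filter.limsup (fun k : ℕ => ρ ^ k * (f (x 0) 0 - fstar 0) + c) Filter.atTop := by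
        exact Filter.limsup_le_limsup (Eventually.of_forall hub)
          (isCoboundedUnder_le_of_le atTop hlow) htend.isBoundedUnder_le
    _ = c := htend.limsup_eq
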